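/- Mass conservation for the fully discrete primitive scheme (Theorem 6.1). Let δt > 0, let cⁿ, cⁿ⁺¹, μ̄ⁿ⁺¹, p̄ⁿ⁺¹ be cell-centered grid functions (with ghost values), let (uⁿ⁺¹, vⁿ⁺¹) be an edge-centered velocity satisfying uⁿ⁺¹_{1/2,j} = uⁿ⁺¹_{m₁+1/2,j} = 0 for 1 ≤ j ≤ m₂ and vⁿ⁺¹_{i,1/2} = vⁿ⁺¹_{i,m₂+1/2} = 0 for 1 ≤ i ≤ m₁, and set ρᵏ_{i,j} := ρ(cᵏ_{i,j}) for k = n, n+1 (assuming (ρ₂−ρ₁)cᵏ_{i,j}+ρ₁ ≠ 0 at all grid points used). Suppose that for all 1 ≤ i ≤ m₁, 1 ≤ j ≤ m₂: (continuity) d_x uⁿ⁺¹_{i,j} + d_y vⁿ⁺¹_{i,j} = (α/Pe)[d_x(A_x m(cⁿ)·D_x μ̄ⁿ⁺¹) + d_y(A_y m(cⁿ)·D_y μ̄ⁿ⁺¹)]_{i,j} + (α²/Pe)[d_x(A_x m(cⁿ)·D_x p̄ⁿ⁺¹) + d_y(A_y m(cⁿ)·D_y p̄ⁿ⁺¹)]_{i,j};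 (phase) ρⁿ⁺¹_{i,j}(cⁿ⁺¹_{i,j}−cⁿ_{i,j})/δt + ½[ρⁿ_{i+1,j} D_x cⁿ_{i+1/2,j} uⁿ⁺¹_{i+1/2,j} + ρⁿ_{i−1,j} D_x cⁿ_{i−1/2,j} uⁿ⁺¹_{i−1/2,j}] + ½[ρⁿ_{i,j+1} D_y cⁿ_{i,j+1/2} vⁿ⁺¹_{i,j+1/2} + ρⁿ_{i,j−1} D_y cⁿ_{i,j−1/2} vⁿ⁺¹_{i,j−1/2}] = (1/Pe)[d_x(A_x m(cⁿ)·D_x μ̄ⁿ⁺¹) + d_y(A_y m(cⁿ)·D_y μ̄ⁿ⁺¹)]_{i,j} + (α/Pe)[d_x(A_x m(cⁿ)·D_x p̄ⁿ⁺¹) + d_y(A_y m(cⁿ)·D_y p̄ⁿ⁺¹)]_{i,j}. Then (ρⁿ⁺¹, 1)₂ = (ρⁿ, 1)₂, i.e. the total discrete mass of the binary fluid is exactly conserved. -/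

import Mathlib

open Finset

/-! Staggered-grid notation.  A grid function is a map `ℤ → ℤ → ℝ`.
For a cell-centered function `φ`, `φ i j` is the value `φ_{i,j}`.
For an east-west edge-centered function `u`, `u i j` is the value `u_{i+1/2,j}`.
For a north-south edge-centered function `v`, `v i j` is the value `v_{i,j+1/2}`.
For a vertex-centered function `f`, `f i j` is the value `f_{i+1/2,j+1/2}`. -/
abbrev GridFn := ℤ → ℤ → ℝ

/-- pointwise product of grid functions -/
noncomputable def gmul (f g : GridFn) : GridFn := fun i j => f i j * g i j

/-- the constant grid function `1` -/
noncomputable def oneG : GridFn := fun _ _ => (1 : ℝ)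

/-- edge-to-center average `a_x u_{i,j} = (u_{i+1/2,j}+u_{i-1/2,j})/2` -/
noncomputable def aX (u : GridFn) : GridFn := fun i j => (u i j + u (i - 1) j) / 2
/-- edge-to-center difference `d_x u_{i,j} = (u_{i+1/2,j}-u_{i-1/2,j})/h` -/
noncomputable def dX (h : ℝ) (u : GridFn) : GridFn := fun i j => (u i j - u (i - 1) j) / h
/-- edge-to-center average `a_y v_{i,j} = (v_{i,j+1/2}+v_{i,j-1/2})/2` -/
noncomputable def aY (v : GridFn) : GridFn := fun i j => (v i j + v i (j - 1)) / 2
/-- edge-to-center difference `d_y v_{i,j} = (v_{i,j+1/2}-v_{i,j-1/2})/h` -/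
noncomputable def dY (h : ℝ) (v : GridFn) : GridFn := fun i j => (v i j - v i (j - 1)) / h

/-- center-to-edge average `A_x φ_{i+1/2,j} = (φ_{i+1,j}+φ_{i,j})/2` -/
noncomputable def AX (φ : GridFn) : GridFn := fun i j => (φ (i + 1) j + φ i j) / 2
/-- center-to-edge difference `D_x φ_{i+1/2,j} = (φ_{i+1,j}-φ_{i,j})/h` -/
noncomputable def DX (h : ℝ) (φ : GridFn) : GridFn := fun i j => (φ (i + 1) j - φ i j) / h
/-- center-to-edge average `A_y φ_{i,j+1/2} = (φ_{i,j+1}+φ_{i,j})/2` -/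
noncomputable def AY (φ : GridFn) : GridFn := fun i j => (φ i (j + 1) + φ i j) / 2
/-- center-to-edge difference `D_y φ_{i,j+1/2} = (φ_{i,j+1}-φ_{i,j})/h` -/
noncomputable def DY (h : ℝ) (φ : GridFn) : GridFn := fun i j => (φ i (j + 1) - φ i j) / h

/-- center-to-vertex average `𝒜φ_{i+1/2,j+1/2}` -/
noncomputable def cavV (φ : GridFn) : GridFn :=
  fun i j => (φ i j + φ (i + 1) j + φ i (j + 1) + φ (i + 1) (j + 1)) / 4
/-- vertex-to-center average (the four vertices surrounding cell `(i,j)`) -/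
noncomputable def vavC (f : GridFn) : GridFn :=
  fun i j => (f (i - 1) (j - 1) + f i (j - 1) + f (i - 1) j + f i j) / 4

/-- edge-to-vertex average `𝒜_x v_{i+1/2,j+1/2} = (v_{i+1,j+1/2}+v_{i,j+1/2})/2` -/
noncomputable def eAX (v : GridFn) : GridFn := fun i j => (v (i + 1) j + v i j) / 2
/-- edge-to-vertex difference `𝒟_x v_{i+1/2,j+1/2} = (v_{i+1,j+1/2}-v_{i,j+1/2})/h` -/
noncomputable def eDX (h : ℝ) (v : GridFn) : GridFn := fun i j => (v (i + 1) j - v i j) / h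
/-- edge-to-vertex average `𝒜_y u_{i+1/2,j+1/2} = (u_{i+1/2,j+1}+u_{i+1/2,j})/2` -/
noncomputable def eAY (u : GridFn) : GridFn := fun i j => (u i (j + 1) + u i j) / 2
/-- edge-to-vertex difference `𝒟_y u_{i+1/2,j+1/2} = (u_{i+1/2,j+1}-u_{i+1/2,j})/h` -/
noncomputable def eDY (h : ℝ) (u : GridFn) : GridFn := fun i j => (u i (j + 1) - u i j) / h

/-- vertex-to-edge average `𝔄_x f_{i,j+1/2} = (f_{i+1/2,j+1/2}+f_{i-1/2,j+1/2})/2` -/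
noncomputable def vAX (f : GridFn) : GridFn := fun i j => (f i j + f (i - 1) j) / 2
/-- vertex-to-edge difference `𝔇_x f_{i,j+1/2} = (f_{i+1/2,j+1/2}-f_{i-1/2,j+1/2})/h` -/
noncomputable def vDX (h : ℝ) (f : GridFn) : GridFn := fun i j => (f i j - f (i - 1) j) / h
/-- vertex-to-edge average `𝔄_y f_{i+1/2,j} = (f_{i+1/2,j+1/2}+f_{i+1/2,j-1/2})/2` -/
noncomputable def vAY (f : GridFn) : GridFn := fun i j => (f i j + f i (j - 1)) / 2
/-- vertex-to-edge difference `𝔇_y f_{i+1/2,j} = (f_{i+1/2,j+1/2}-f_{i+1/2,j-1/2})/h` -/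
noncomputable def vDY (h : ℝ) (f : GridFn) : GridFn := fun i j => (f i j - f i (j - 1)) / h

/-- cell-centered inner product `(φ,ψ)₂ = Σ_{i=1}^{m₁} Σ_{j=1}^{m₂} φ_{i,j}ψ_{i,j}` -/
noncomputable def ip2 (m₁ m₂ : ℤ) (φ ψ : GridFn) : ℝ :=
  ∑ i ∈ Icc 1 m₁, ∑ j ∈ Icc 1 m₂, φ i j * ψ i j

/-- east-west edge inner product `[u,γ]_ew = (a_x(uγ),1)₂` -/
noncomputable def ipEW (m₁ m₂ : ℤ) (u γ : GridFn) : ℝ := ip2 m₁ m₂ (aX (gmul u γ)) oneG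

/-- north-south edge inner product `[v,ω]_ns = (a_y(vω),1)₂` -/
noncomputable def ipNS (m₁ m₂ : ℤ) (v ω : GridFn) : ℝ := ip2 m₁ m₂ (aY (gmul v ω)) oneG


/-- Theorem 6.1: total-mass conservation for the fully discrete primitive scheme.
Here `ρ(c) = ρ₁ρ₂/((ρ₂−ρ₁)c+ρ₁)`, `m(c) = √(c²(1−c)²+ε)` and
`α = (ρ₂−ρ₁)/(ρ₁ρ₂)`. -/

private lemma rho_diff' (ρ₁ ρ₂ a b : ℝ) (h1 : ρ₁ ≠ 0) (h2 : ρ₂ ≠ 0)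
    (ha : (ρ₂ - ρ₁) * a + ρ₁ ≠ 0) (hb : (ρ₂ - ρ₁) * b + ρ₁ ≠ 0) :
    ρ₁ * ρ₂ / ((ρ₂ - ρ₁) * a + ρ₁) - ρ₁ * ρ₂ / ((ρ₂ - ρ₁) * b + ρ₁)
      = (ρ₂ - ρ₁) / (ρ₁ * ρ₂) * (ρ₁ * ρ₂ / ((ρ₂ - ρ₁) * a + ρ₁))
          * (ρ₁ * ρ₂ / ((ρ₂ - ρ₁) * b + ρ₁)) * (b - a) := by
  field_simp
  ring

private lemma telescope' (f : ℤ → ℝ) (n : ℤ) (hn : 1 ≤ n) :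
    ∑ i ∈ Icc (1 : ℤ) n, (f i - f (i - 1)) = f n - f 0 := by
  refine Int.le_induction (motive := fun n _ => ∑ i ∈ Icc (1 : ℤ) n, (f i - f (i - 1)) = f n - f 0)
    ?_ ?_ n hn
  · simp
  · intro n hn ih
    rw [show Icc (1 : ℤ) (n + 1) = insert (n + 1) (Icc 1 n) by
          ext x; simp only [Finset.mem_insert, mem_Icc]; omega,
        Finset.sum_insert (by simp), ih]
    have : n + 1 - 1 = n := by ring
    rw [this]; ring

theorem fully_discrete_primitive_mass_conservation
    (m₁ m₂ : ℤ) (h δt Pe ε ρ₁ ρ₂ : ℝ)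
    (hm₁ : 1 ≤ m₁) (hm₂ : 1 ≤ m₂) (hh : 0 < h) (hδt : 0 < δt)
    (hPe : 0 < Pe) (hε : 0 < ε) (hρ₁ : 0 < ρ₁) (hρ₂ : 0 < ρ₂)
    (cn cn1 μb pb u v : GridFn)
    -- nonvanishing of the density denominator at all grid points used
    (hne : ∀ i ∈ Icc 0 (m₁ + 1), ∀ j ∈ Icc 0 (m₂ + 1),
      (ρ₂ - ρ₁) * cn i j + ρ₁ ≠ 0 ∧ (ρ₂ - ρ₁) * cn1 i j + ρ₁ ≠ 0)
    -- no-slip boundary values of the velocity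
    (hubc : ∀ j ∈ Icc 1 m₂, u 0 j = 0 ∧ u m₁ j = 0)
    (hvbc : ∀ i ∈ Icc 1 m₁, v i 0 = 0 ∧ v i m₂ = 0) :
    let α : ℝ := (ρ₂ - ρ₁) / (ρ₁ * ρ₂)
    let ρfun : ℝ → ℝ := fun s => ρ₁ * ρ₂ / ((ρ₂ - ρ₁) * s + ρ₁)
    let mfun : ℝ → ℝ := fun s => Real.sqrt (s ^ 2 * (1 - s) ^ 2 + ε)
    let ρn : GridFn := fun i j => ρfun (cn i j)
    let ρn1 : GridFn := fun i j => ρfun (cn1 i j)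
    let mc : GridFn := fun i j => mfun (cn i j)
    let fluxμ : GridFn := fun i j =>
      dX h (gmul (AX mc) (DX h μb)) i j + dY h (gmul (AY mc) (DY h μb)) i j
    let fluxp : GridFn := fun i j =>
      dX h (gmul (AX mc) (DX h pb)) i j + dY h (gmul (AY mc) (DY h pb)) i j
    -- discrete continuity equation
    (∀ i ∈ Icc 1 m₁, ∀ j ∈ Icc 1 m₂,
      dX h u i j + dY h v i j = α / Pe * fluxμ i j + α ^ 2 / Pe * fluxp i j) →
    -- discrete phase equation
    (∀ i ∈ Icc 1 m₁, ∀ j ∈ Icc 1 m₂,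
      ρn1 i j * (cn1 i j - cn i j) / δt
        + (ρn (i + 1) j * DX h cn i j * u i j
            + ρn (i - 1) j * DX h cn (i - 1) j * u (i - 1) j) / 2
        + (ρn i (j + 1) * DY h cn i j * v i j
            + ρn i (j - 1) * DY h cn i (j - 1) * v i (j - 1)) / 2
        = 1 / Pe * fluxμ i j + α / Pe * fluxp i j) →
    ip2 m₁ m₂ ρn1 oneG = ip2 m₁ m₂ ρn oneG := by
  intro α ρfun mfun ρn ρn1 mc fluxμ fluxp hcont hphase
  have hρ₁' : ρ₁ ≠ 0 := hρ₁.ne'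
  have hρ₂' : ρ₂ ≠ 0 := hρ₂.ne'
  obtain ⟨Fx, hFx⟩ : ∃ F : GridFn, ∀ a b, F a b = (ρn (a + 1) b + ρn a b) / 2 * u a b :=
    ⟨_, fun a b => rfl⟩
  obtain ⟨Fy, hFy⟩ : ∃ F : GridFn, ∀ a b, F a b = (ρn a (b + 1) + ρn a b) / 2 * v a b :=
    ⟨_, fun a b => rfl⟩
  have key : ∀ i ∈ Icc (1 : ℤ) m₁, ∀ j ∈ Icc (1 : ℤ) m₂,
      ρn1 i j - ρn i j
        = -δt / h * (Fx i j - Fx (i - 1) j) + -δt / h * (Fy i j - Fy i (j - 1)) := by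
    intro i hi j hj
    simp only [mem_Icc] at hi hj
    have hmem : ∀ a b : ℤ, 0 ≤ a → a ≤ m₁ + 1 → 0 ≤ b → b ≤ m₂ + 1 →
        (ρ₂ - ρ₁) * cn a b + ρ₁ ≠ 0 ∧ (ρ₂ - ρ₁) * cn1 a b + ρ₁ ≠ 0 := by
      intro a b h1 h2 h3 h4
      exact hne a (by simp only [mem_Icc]; omega) b (by simp only [mem_Icc]; omega)
    have h00 := hmem i j (by omega) (by omega) (by omega) (by omega)
    have hxp := hmem (i + 1) j (by omega) (by omega) (by omega) (by omega)
    have hxm := hmem (i - 1) j (by omega) (by omega) (by omega) (by omega)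
    have hyp := hmem i (j + 1) (by omega) (by omega) (by omega) (by omega)
    have hym := hmem i (j - 1) (by omega) (by omega) (by omega) (by omega)
    have hA : ρn1 i j - ρn i j = α * ρn1 i j * ρn i j * (cn i j - cn1 i j) :=
      rho_diff' ρ₁ ρ₂ (cn1 i j) (cn i j) hρ₁' hρ₂' h00.2 h00.1
    have hB : ρn i j - ρn (i + 1) j
        = α * ρn i j * ρn (i + 1) j * (cn (i + 1) j - cn i j) :=
      rho_diff' ρ₁ ρ₂ (cn i j) (cn (i + 1) j) hρ₁' hρ₂' h00.1 hxp.1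
    have hC : ρn (i - 1) j - ρn i j
        = α * ρn (i - 1) j * ρn i j * (cn i j - cn (i - 1) j) :=
      rho_diff' ρ₁ ρ₂ (cn (i - 1) j) (cn i j) hρ₁' hρ₂' hxm.1 h00.1
    have hD : ρn i j - ρn i (j + 1)
        = α * ρn i j * ρn i (j + 1) * (cn i (j + 1) - cn i j) :=
      rho_diff' ρ₁ ρ₂ (cn i j) (cn i (j + 1)) hρ₁' hρ₂' h00.1 hyp.1
    have hE : ρn i (j - 1) - ρn i j
        = α * ρn i (j - 1) * ρn i j * (cn i j - cn i (j - 1)) :=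
      rho_diff' ρ₁ ρ₂ (cn i (j - 1)) (cn i j) hρ₁' hρ₂' hym.1 h00.1
    have hph := hphase i (by simp only [mem_Icc]; omega) j (by simp only [mem_Icc]; omega)
    have hco := hcont i (by simp only [mem_Icc]; omega) j (by simp only [mem_Icc]; omega)
    simp only [DX, DY] at hph
    simp only [dX, dY] at hco
    have e1 : i - 1 + 1 = i := by ring
    have e2 : j - 1 + 1 = j := by ring
    rw [e1, e2] at hph
    have hinv : δt * δt⁻¹ = 1 := mul_inv_cancel₀ hδt.ne'
    rw [hFx i j, hFx (i - 1) j, hFy i j, hFy i (j - 1)]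
    have e1 : i - 1 + 1 = i := by ring
    have e2 : j - 1 + 1 = j := by ring
    rw [e1, e2]
    linear_combination (α * ρn i j * ρn1 i j * (cn1 i j - cn i j)) * hinv + hA - (α * ρn i j * δt) * hph + (ρn i j * δt) * hco
      - (δt * u i j / (2 * h)) * hB - (δt * u (i - 1) j / (2 * h)) * hC
      - (δt * v i j / (2 * h)) * hD - (δt * v i (j - 1) / (2 * h)) * hE
  rw [← sub_eq_zero]
  simp only [ip2, oneG, mul_one, ← Finset.sum_sub_distrib]
  rw [Finset.sum_congr rfl fun i hi => Finset.sum_congr rfl fun j hj => key i hi j hj]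
  simp only [Finset.sum_add_distrib]
  have hx : ∑ i ∈ Icc (1 : ℤ) m₁, ∑ j ∈ Icc (1 : ℤ) m₂,
      -δt / h * (Fx i j - Fx (i - 1) j) = 0 := by
    rw [Finset.sum_comm]
    refine Finset.sum_eq_zero fun j hj => ?_
    rw [← Finset.mul_sum]
    have t := telescope' (fun a => Fx a j) m₁ hm₁
    rw [t, hFx m₁ j, hFx 0 j, (hubc j hj).1, (hubc j hj).2]
    ring
  have hy : ∑ i ∈ Icc (1 : ℤ) m₁, ∑ j ∈ Icc (1 : ℤ) m₂,
      -δt / h * (Fy i j - Fy i (j - 1)) = 0 := by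
    refine Finset.sum_eq_zero fun i hi => ?_
    rw [← Finset.mul_sum]
    have t := telescope' (fun b => Fy i b) m₂ hm₂
    rw [t, hFy i m₂, hFy i 0, (hvbc i hi).1, (hvbc i hi).2]
    ring
  rw [hx, hy, add_zero]
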